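/- Let X₁ ⊆ X₂ ⊆ ⋯ and Y₁ ⊆ Y₂ ⊆ ⋯ be ascending sequences of locally kω spaces with continuous inclusion maps, and let X, Y be their unions with the direct limit topologies. Then the natural continuous bijection lim→(Xₙ × Yₙ) → X × Y is a homeomorphism, i.e., the direct limit topology on ⋃ₙ(Xₙ × Yₙ) coincides with the product topology on X × Y. -/

import Mathlib

/-- `K` is a kω-sequence for the topological space `X`: an ascending sequence of
compact subsets covering `X` such that the topology of `X` is final with respect
to the inclusions `K n → X`. -/
def IsKOmegaSeq {X : Type*} [TopologicalSpace X] (K : ℕ → Set X) : Prop :=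
  (∀ n, IsCompact (K n)) ∧ Monotone K ∧ (⋃ n, K n) = Set.univ ∧
    ∀ U : Set X, IsOpen U ↔ ∀ n, IsOpen ((Subtype.val ⁻¹' U) : Set (K n))

/-- A kω-space: a Hausdorff space which is the direct limit of an ascending
sequence of compact subsets. -/
def IsKOmega (X : Type*) [TopologicalSpace X] : Prop :=
  T2Space X ∧ ∃ K : ℕ → Set X, IsKOmegaSeq K

/-- A locally kω space: a Hausdorff space each point of which has an open
neighbourhood which is a kω-space in the induced topology. -/
def IsLocallyKOmega (X : Type*) [TopologicalSpace X] : Prop :=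
  T2Space X ∧ ∀ x : X, ∃ U : Set X, IsOpen U ∧ x ∈ U ∧ IsKOmega U

open TopologicalSpace Set Topology

/-- Ambient formulation of "`Ω` is an open subset which is kω with witnessing
compact sequence `K`". -/
def AKW {X : Type*} [TopologicalSpace X] (Ω : Set X) (K : ℕ → Set X) : Prop :=
  IsOpen Ω ∧ (∀ m, IsCompact (K m)) ∧ Monotone K ∧ (⋃ m, K m) = Ω ∧
    ∀ Z : Set X, Z ⊆ Ω → (∀ m, ∃ O : Set X, IsOpen O ∧ Z ∩ K m = O ∩ K m) → IsOpen Z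

lemma AKW.mem_exists {X : Type*} [TopologicalSpace X] (h : IsLocallyKOmega X) (x : X) :
    ∃ Ω K, x ∈ Ω ∧ AKW Ω K := by
  obtain ⟨-, hloc⟩ := h
  obtain ⟨U, hUopen, hxU, -, K, hKc, hKmono, hKcover, hKfin⟩ := hloc x
  refine ⟨U, fun m => Subtype.val '' K m, hxU, hUopen,
    fun m => (hKc m).image continuous_subtype_val,
    fun m m' hm => Set.image_mono (hKmono hm), ?_, ?_⟩
  · rw [← Set.image_iUnion, hKcover, Set.image_univ, Subtype.range_coe]
  · intro Z hZU htr
    have hV : IsOpen (Subtype.val ⁻¹' Z : Set U) := by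
      rw [hKfin]
      intro m
      obtain ⟨O, hO, hOeq⟩ := htr m
      have heq : (Subtype.val ⁻¹' (Subtype.val ⁻¹' Z : Set U) : Set (K m))
          = (fun y : K m => ((y : U) : X)) ⁻¹' O := by
        ext y
        have hy : ((y : U) : X) ∈ Subtype.val '' K m := ⟨y.1, y.2, rfl⟩
        constructor
        · intro hz
          have h2 : ((y : U) : X) ∈ Z ∩ Subtype.val '' K m := ⟨hz, hy⟩
          rw [hOeq] at h2; exact h2.1
        · intro hz
          have h2 : ((y : U) : X) ∈ O ∩ Subtype.val '' K m := ⟨hz, hy⟩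
          rw [← hOeq] at h2; exact h2.1
      rw [heq]
      exact hO.preimage (continuous_subtype_val.comp continuous_subtype_val)
    have hZeq : Z = Subtype.val '' (Subtype.val ⁻¹' Z : Set U) := by
      rw [Subtype.image_preimage_coe]
      exact (Set.inter_eq_right.mpr hZU).symm
    rw [hZeq]
    exact hUopen.isOpenMap_subtype_val _ hV

lemma AKW.iUnion {X : Type*} [TopologicalSpace X] (Ω : ℕ → Set X) (K : ℕ → ℕ → Set X)
    (h : ∀ i, AKW (Ω i) (K i)) :
    AKW (⋃ i, Ω i) (fun m => ⋃ i : Fin (m + 1), K i m) := by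
  have hKsubΩ : ∀ i m, K i m ⊆ Ω i := fun i m x hx =>
    (h i).2.2.2.1 ▸ Set.mem_iUnion.mpr ⟨m, hx⟩
  refine ⟨isOpen_iUnion fun i => (h i).1,
    fun m => isCompact_iUnion fun i => (h i.1).2.1 m, ?_, ?_, ?_⟩
  · intro m m' hmm' x hx
    obtain ⟨i, hi⟩ := Set.mem_iUnion.mp hx
    exact Set.mem_iUnion.mpr ⟨⟨i.1, by omega⟩, (h i.1).2.2.1 hmm' hi⟩
  · apply subset_antisymm
    · intro x hx
      obtain ⟨m, hm⟩ := Set.mem_iUnion.mp hx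
      obtain ⟨i, hi⟩ := Set.mem_iUnion.mp hm
      exact Set.mem_iUnion.mpr ⟨i.1, hKsubΩ i.1 m hi⟩
    · intro x hx
      obtain ⟨i, hi⟩ := Set.mem_iUnion.mp hx
      obtain ⟨m, hm⟩ := Set.mem_iUnion.mp ((h i).2.2.2.1 ▸ hi : x ∈ ⋃ m, K i m)
      exact Set.mem_iUnion.mpr ⟨max i m, Set.mem_iUnion.mpr
        ⟨⟨i, by omega⟩, (h i).2.2.1 (le_max_right i m) hm⟩⟩
  · intro Z hZ htr
    have htr' : ∀ i m, ∃ O, IsOpen O ∧ Z ∩ K i m = O ∩ K i m := by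
      intro i m
      obtain ⟨O, hO, hOeq⟩ := htr (max i m)
      refine ⟨O, hO, ?_⟩
      have hsub : K i m ⊆ ⋃ j : Fin (max i m + 1), K j (max i m) := fun x hx =>
        Set.mem_iUnion.mpr ⟨⟨i, by omega⟩, (h i).2.2.1 (le_max_right i m) hx⟩
      ext x
      constructor
      · rintro ⟨h1, h2⟩
        have h3 : x ∈ O ∩ ⋃ j : Fin (max i m + 1), K j (max i m) := hOeq ▸ ⟨h1, hsub h2⟩
        exact ⟨h3.1, h2⟩
      · rintro ⟨h1, h2⟩
        have h3 : x ∈ Z ∩ ⋃ j : Fin (max i m + 1), K j (max i m) := hOeq ▸ ⟨h1, hsub h2⟩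
        exact ⟨h3.1, h2⟩
    have hopen : ∀ i, IsOpen (Z ∩ Ω i) := by
      intro i
      apply (h i).2.2.2.2 _ Set.inter_subset_right
      intro m
      obtain ⟨O, hO, hOeq⟩ := htr' i m
      refine ⟨O, hO, ?_⟩
      rw [Set.inter_assoc, Set.inter_eq_self_of_subset_right (hKsubΩ i m)]
      exact hOeq
    have : Z = ⋃ i, Z ∩ Ω i := by
      apply subset_antisymm
      · intro x hx
        obtain ⟨i, hi⟩ := Set.mem_iUnion.mp (hZ hx)
        exact Set.mem_iUnion.mpr ⟨i, hx, hi⟩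
      · exact Set.iUnion_subset fun i => Set.inter_subset_left
    rw [this]
    exact isOpen_iUnion hopen

lemma AKW.compact_exists {X : Type*} [TopologicalSpace X] (h : IsLocallyKOmega X)
    {C : Set X} (hC : IsCompact C) : ∃ Ω K, C ⊆ Ω ∧ AKW Ω K := by
  choose Ω K hmem hakw using AKW.mem_exists h
  have hcov : C ⊆ ⋃ x, Ω x := fun x _ => Set.mem_iUnion.mpr ⟨x, hmem x⟩
  obtain ⟨t, ht⟩ := hC.elim_finite_subcover Ω (fun x => (hakw x).1) hcov
  rcases t.eq_empty_or_nonempty with rfl | ⟨x₀, hx₀⟩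
  · refine ⟨∅, fun _ => ∅, by simpa using ht, isOpen_empty, fun _ => isCompact_empty,
      monotone_const, by simp, fun Z hZ _ => ?_⟩
    rw [Set.subset_empty_iff.mp hZ]; exact isOpen_empty
  · set f : ℕ → X := fun i => t.toList.getD i x₀ with hf
    refine ⟨⋃ i, Ω (f i), _, ?_, AKW.iUnion (fun i => Ω (f i)) (fun i => K (f i))
      (fun i => hakw (f i))⟩
    intro x hx
    obtain ⟨y, hyt, hy⟩ : ∃ y ∈ t, x ∈ Ω y := by
      have := ht hx
      simpa using this
    obtain ⟨i, hi, hget⟩ := List.mem_iff_getElem.mp (Finset.mem_toList.mpr hyt)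
    refine Set.mem_iUnion.mpr ⟨i, ?_⟩
    have : f i = y := by
      rw [hf]; simp only [List.getD_eq_getElem?_getD]
      rw [List.getElem?_eq_getElem hi]
      simpa using hget
    rw [this]; exact hy

lemma AKW.sigma_exists {X : Type*} [TopologicalSpace X] (h : IsLocallyKOmega X)
    (M : ℕ → Set X) (hM : ∀ i, IsCompact (M i)) :
    ∃ Ω K, (⋃ i, M i) ⊆ Ω ∧ AKW Ω K := by
  choose Ω K hsub hakw using fun i => AKW.compact_exists h (hM i)
  exact ⟨⋃ i, Ω i, _, Set.iUnion_mono hsub, AKW.iUnion Ω K hakw⟩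

lemma exists_seq_rec {P : ℕ → Sort*} (R : ∀ k, P k → P (k + 1) → Prop) (b : P 0)
    (h : ∀ k (p : P k), ∃ q, R k p q) :
    ∃ f : ∀ k, P k, f 0 = b ∧ ∀ k, R k (f k) (f (k + 1)) := by
  refine ⟨fun k => Nat.rec b (fun k p => (h k p).choose) k, rfl, fun k => ?_⟩
  exact (h k _).choose_spec

lemma shrink {X : Type*} [TopologicalSpace X] [T2Space X] {C E' O₁ : Set X}
    (hC : IsCompact C) (hE' : IsCompact E') (hE'C : E' ⊆ C) (hO : IsOpen O₁)
    (hEO : E' ⊆ O₁) :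
    ∃ U E : Set X, (∃ O, IsOpen O ∧ U = O ∩ C) ∧ E' ⊆ U ∧ U ⊆ E ∧ IsCompact E ∧
      E ⊆ C ∧ E ⊆ O₁ := by
  haveI : CompactSpace C := isCompact_iff_compactSpace.mp hC
  have hclosed : IsClosed ((Subtype.val ⁻¹' E') : Set C) :=
    hE'.isClosed.preimage continuous_subtype_val
  have hopen : IsOpen ((Subtype.val ⁻¹' O₁) : Set C) := hO.preimage continuous_subtype_val
  obtain ⟨u, huopen, hsu, hcu⟩ := normal_exists_closure_subset hclosed hopen
    (fun x hx => hEO hx)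
  obtain ⟨O, hOopen, hOpre⟩ := isOpen_induced_iff.mp huopen
  refine ⟨Subtype.val '' u, Subtype.val '' (closure u), ⟨O, hOopen, ?_⟩, ?_,
    Set.image_mono subset_closure,
    (isClosed_closure.isCompact).image continuous_subtype_val, ?_, ?_⟩
  · rw [← hOpre, Subtype.image_preimage_coe, Set.inter_comm]
  · intro x hx; exact ⟨⟨x, hE'C hx⟩, hsu hx, rfl⟩
  · rintro x ⟨y, _, rfl⟩; exact y.2
  · rintro x ⟨y, hy, rfl⟩; exact hcu hy

structure Pack {A B : Type*} (SS : Set A) (TT : Set B) [TopologicalSpace SS]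
    [TopologicalSpace TT] (C : Set SS) (D : Set TT) (W : Set (A × B)) where
  U : Set SS
  E : Set SS
  V : Set TT
  F : Set TT
  hU : ∃ O, IsOpen O ∧ U = O ∩ C
  hUE : U ⊆ E
  hE : IsCompact E
  hEC : E ⊆ C
  hV : ∃ O, IsOpen O ∧ V = O ∩ D
  hVF : V ⊆ F
  hF : IsCompact F
  hFD : F ⊆ D
  hW : ∀ p ∈ E, ∀ q ∈ F, ((p : A), (q : B)) ∈ W

lemma pack_step {A B : Type*} {SS : Set A} {TT : Set B} [TopologicalSpace SS]
    [TopologicalSpace TT] [T2Space SS] [T2Space TT]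
    {C : Set SS} {D : Set TT} {W : Set (A × B)} (hC : IsCompact C) (hD : IsCompact D)
    (hWo : IsOpen ((fun p : SS × TT => (((p.1 : A), (p.2 : B)) : A × B)) ⁻¹' W))
    {E' : Set SS} {F' : Set TT} (hE' : IsCompact E') (hE'C : E' ⊆ C)
    (hF' : IsCompact F') (hF'D : F' ⊆ D)
    (hEF'W : ∀ p ∈ E', ∀ q ∈ F', ((p : A), (q : B)) ∈ W) :
    ∃ P : Pack SS TT C D W, E' ⊆ P.U ∧ F' ⊆ P.V := by
  have hsub : E' ×ˢ F' ⊆ (fun p : SS × TT => (((p.1 : A), (p.2 : B)) : A × B)) ⁻¹' W :=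
    fun p hp => hEF'W _ hp.1 _ hp.2
  obtain ⟨O₁, O₂, hO₁, hO₂, hEO₁, hFO₂, hprod⟩ :=
    generalized_tube_lemma hE' hF' hWo hsub
  obtain ⟨U, E, hUform, hE'U, hUE, hEcomp, hEC, hEO₁'⟩ := shrink hC hE' hE'C hO₁ hEO₁
  obtain ⟨V, F, hVform, hF'V, hVF, hFcomp, hFD, hFO₂'⟩ := shrink hD hF' hF'D hO₂ hFO₂
  exact ⟨⟨U, E, V, F, hUform, hUE, hEcomp, hEC, hVform, hVF, hFcomp, hFD,
    fun p hp q hq => hprod (Set.mk_mem_prod (hEO₁' hp) (hFO₂' hq))⟩, hE'U, hF'V⟩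

lemma chain_mem {A : Type*} {S : ℕ → Set A} (hSmono : Monotone S) (n₀ : ℕ)
    (C : ∀ k, Set (S (n₀ + k)))
    (hstep : ∀ k, ∀ x ∈ C k, Set.inclusion (hSmono (Nat.le_succ _)) x ∈ C (k + 1)) :
    ∀ {j k : ℕ} (h : j ≤ k), ∀ x ∈ C j,
      Set.inclusion (hSmono (Nat.add_le_add_left h n₀)) x ∈ C k := by
  intro j k h
  induction k, h using Nat.le_induction with
  | base =>
    intro x hx
    have heq : Set.inclusion (hSmono (Nat.add_le_add_left (le_refl j) n₀)) x = x :=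
      Subtype.ext rfl
    rw [heq]; exact hx
  | succ k hjk ih =>
    intro x hx
    have h2 := hstep k _ (ih x hx)
    have heq : Set.inclusion (hSmono (Nat.le_succ _))
        (Set.inclusion (hSmono (Nat.add_le_add_left hjk n₀)) x)
        = Set.inclusion (hSmono (Nat.add_le_add_left (Nat.le_succ_of_le hjk) n₀)) x :=
      Subtype.ext rfl
    rw [heq] at h2
    exact h2

lemma incl_cont {A : Type*} {S : ℕ → Set A} (hSmono : Monotone S)
    (tS : ∀ n, TopologicalSpace (S n))
    (hSincl : ∀ n, @Continuous _ _ (tS n) (tS (n + 1))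
      (Set.inclusion (hSmono (Nat.le_succ n))))
    {n m : ℕ} (h : n ≤ m) :
    @Continuous _ _ (tS n) (tS m) (Set.inclusion (hSmono h)) := by
  letI := tS
  induction m, h using Nat.le_induction with
  | base => exact continuous_id.congr fun x => Subtype.ext rfl
  | succ m hm ih => exact ((hSincl m).comp ih).congr fun x => Subtype.ext rfl

lemma exists_good {A : Type*} (S : ℕ → Set A) (hSmono : Monotone S)
    (tS : ∀ n, TopologicalSpace (S n))
    (hSincl : ∀ n, @Continuous _ _ (tS n) (tS (n + 1))
      (Set.inclusion (hSmono (Nat.le_succ n))))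
    (hSlkom : ∀ n, @IsLocallyKOmega (S n) (tS n))
    (n₀ : ℕ) (a : A) (ha : a ∈ S n₀) :
    ∃ C : ∀ k, Set (S (n₀ + k)),
      (∀ k, IsCompact (C k)) ∧
      (∀ k, ∀ x ∈ C k, Set.inclusion (hSmono (Nat.le_succ (n₀ + k))) x ∈ C (k + 1)) ∧
      (⟨a, ha⟩ : S (n₀ + 0)) ∈ C 0 ∧
      ∀ Z : Set A, (Z ⊆ ⋃ k, Subtype.val '' C k) →
        (∀ k, ∃ O : Set (S (n₀ + k)), IsOpen O ∧
          (Subtype.val ⁻¹' Z) ∩ C k = O ∩ C k) →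
        IsOpen[⨆ n, TopologicalSpace.coinduced Subtype.val (tS n)] Z := by
  letI := tS
  -- build the sequence of open kω neighbourhoods
  obtain ⟨Ω₀, K₀, hmem₀, hakw₀⟩ := AKW.mem_exists (hSlkom (n₀ + 0)) (⟨a, ha⟩ : S (n₀ + 0))
  have hstep : ∀ k (p : Σ' (Ω : Set (S (n₀ + k))) (K : ℕ → Set (S (n₀ + k))), AKW Ω K),
      ∃ q : Σ' (Ω : Set (S (n₀ + (k + 1)))) (K : ℕ → Set (S (n₀ + (k + 1)))), AKW Ω K,
        ∀ x ∈ p.1, Set.inclusion (hSmono (Nat.le_succ (n₀ + k))) x ∈ q.1 := by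
    rintro k ⟨Ω, K, hakw⟩
    obtain ⟨Ω', K', hsub, hakw'⟩ := AKW.sigma_exists (hSlkom (n₀ + (k + 1)))
      (fun i => Set.inclusion (hSmono (Nat.le_succ (n₀ + k))) '' K i)
      (fun i => (hakw.2.1 i).image (incl_cont hSmono tS hSincl (Nat.le_succ (n₀ + k))))
    refine ⟨⟨Ω', K', hakw'⟩, ?_⟩
    intro x hx
    obtain ⟨i, hi⟩ := Set.mem_iUnion.mp (show x ∈ ⋃ i, K i from hakw.2.2.2.1 ▸ hx)
    exact hsub (Set.mem_iUnion.mpr ⟨i, ⟨x, hi, rfl⟩⟩)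
  obtain ⟨f, hf0, hflink⟩ := exists_seq_rec _ (⟨Ω₀, K₀, hakw₀⟩ :
    Σ' (Ω : Set (S (n₀ + 0))) (K : ℕ → Set (S (n₀ + 0))), AKW Ω K) hstep
  set Ω : ∀ k, Set (S (n₀ + k)) := fun k => (f k).1 with hΩdef
  set K : ∀ k, ℕ → Set (S (n₀ + k)) := fun k => (f k).2.1 with hKdef
  have hakw : ∀ k, AKW (Ω k) (K k) := fun k => (f k).2.2
  have hΩlink : ∀ k, ∀ x ∈ Ω k, Set.inclusion (hSmono (Nat.le_succ _)) x ∈ Ω (k + 1) :=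
    fun k => hflink k
  have hΩchain : ∀ {j k : ℕ} (h : j ≤ k), ∀ x ∈ Ω j,
      Set.inclusion (hSmono (Nat.add_le_add_left h n₀)) x ∈ Ω k :=
    @chain_mem A S hSmono n₀ Ω hΩlink
  have hKsubΩ : ∀ j m, K j m ⊆ Ω j := fun j m x hx =>
    (hakw j).2.2.2.1 ▸ Set.mem_iUnion.mpr ⟨m, hx⟩
  have haΩ : (⟨a, ha⟩ : S (n₀ + 0)) ∈ Ω 0 := by
    show (⟨a, ha⟩ : S (n₀ + 0)) ∈ (f 0).1
    rw [hf0]; exact hmem₀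
  obtain ⟨m₀, hm₀⟩ : ∃ m₀, (⟨a, ha⟩ : S (n₀ + 0)) ∈ K 0 m₀ :=
    Set.mem_iUnion.mp ((hakw 0).2.2.2.1.symm ▸ haΩ)
  -- the compact exhaustion
  set C : ∀ k, Set (S (n₀ + k)) := fun k =>
    ⋃ i : Fin (k + 1), Set.inclusion
      (hSmono (Nat.add_le_add_left (Nat.lt_succ_iff.mp i.2) n₀)) '' K i.1 (m₀ + k)
    with hCdef
  have hCsubΩ : ∀ k, C k ⊆ Ω k := by
    intro k x hx
    obtain ⟨i, y, hy, rfl⟩ := Set.mem_iUnion.mp hx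
    exact hΩchain (Nat.lt_succ_iff.mp i.2) y (hKsubΩ i.1 (m₀ + k) hy)
  have hKinC : ∀ (j m k : ℕ) (hjk : j ≤ k), m ≤ m₀ + k →
      ∀ x ∈ K j m, Set.inclusion (hSmono (Nat.add_le_add_left hjk n₀)) x ∈ C k := by
    intro j m k hjk hmk x hx
    exact Set.mem_iUnion.mpr ⟨⟨j, by omega⟩, x, (hakw j).2.2.1 hmk hx, Subtype.ext rfl⟩
  refine ⟨C, ?_, ?_, ?_, ?_⟩
  · intro k
    exact isCompact_iUnion fun i => ((hakw i.1).2.1 (m₀ + k)).image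
      (incl_cont hSmono tS hSincl (Nat.add_le_add_left (Nat.lt_succ_iff.mp i.2) n₀))
  · intro k x hx
    obtain ⟨i, y, hy, rfl⟩ := Set.mem_iUnion.mp hx
    refine Set.mem_iUnion.mpr ⟨⟨i.1, by omega⟩, y, (hakw i.1).2.2.1 (by omega) hy,
      Subtype.ext rfl⟩
  · exact Set.mem_iUnion.mpr ⟨⟨0, by omega⟩, ⟨a, ha⟩, hm₀, Subtype.ext rfl⟩
  · -- the openness criterion
    intro Z hZsub hZtr
    have hstep1 : ∀ j, IsOpen ((Subtype.val ⁻¹' Z) ∩ Ω j) := by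
      intro j
      apply (hakw j).2.2.2.2 _ Set.inter_subset_right
      intro m
      obtain ⟨O, hOopen, hOeq⟩ := hZtr (max j m)
      refine ⟨Set.inclusion (hSmono (Nat.add_le_add_left (le_max_left j m) n₀)) ⁻¹' O,
        hOopen.preimage (incl_cont hSmono tS hSincl
          (Nat.add_le_add_left (le_max_left j m) n₀)), ?_⟩
      ext x
      constructor
      · rintro ⟨⟨hxZ, _⟩, hxK⟩
        have hxC : Set.inclusion (hSmono (Nat.add_le_add_left (le_max_left j m) n₀)) x
            ∈ C (max j m) := hKinC j m (max j m) (le_max_left j m) (by omega) x hxK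
        have h2 : Set.inclusion (hSmono (Nat.add_le_add_left (le_max_left j m) n₀)) x
            ∈ (Subtype.val ⁻¹' Z) ∩ C (max j m) := ⟨hxZ, hxC⟩
        rw [hOeq] at h2
        exact ⟨h2.1, hxK⟩
      · rintro ⟨hxO, hxK⟩
        have hxC : Set.inclusion (hSmono (Nat.add_le_add_left (le_max_left j m) n₀)) x
            ∈ C (max j m) := hKinC j m (max j m) (le_max_left j m) (by omega) x hxK
        have h2 : Set.inclusion (hSmono (Nat.add_le_add_left (le_max_left j m) n₀)) x
            ∈ O ∩ C (max j m) := ⟨hxO, hxC⟩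
        rw [← hOeq] at h2
        exact ⟨⟨h2.1, hKsubΩ j m hxK⟩, hxK⟩
    rw [isOpen_iSup_iff]
    intro n
    rw [isOpen_coinduced]
    have heq : (Subtype.val ⁻¹' Z : Set (S n)) = ⋃ j : ℕ,
        Set.inclusion (hSmono (show n ≤ n₀ + (n + j) by omega)) ⁻¹'
          ((Subtype.val ⁻¹' Z) ∩ Ω (n + j)) := by
      apply subset_antisymm
      · intro x hx
        obtain ⟨k, w, hwC, hwval⟩ : ∃ k w, w ∈ C k ∧ (w : A) = (x : A) := by
          have h3 := hZsub hx
          simp only [Set.mem_iUnion, Set.mem_image] at h3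
          obtain ⟨k, w, hw1, hw2⟩ := h3
          exact ⟨k, w, hw1, hw2⟩
        have hwΩ : Set.inclusion (hSmono (Nat.add_le_add_left (Nat.le_add_left k n) n₀)) w
            ∈ Ω (n + k) := hΩchain (Nat.le_add_left k n) w (hCsubΩ k hwC)
        refine Set.mem_iUnion.mpr ⟨k, ?_⟩
        have hxw : Set.inclusion (hSmono (show n ≤ n₀ + (n + k) by omega)) x
            = Set.inclusion (hSmono (Nat.add_le_add_left (Nat.le_add_left k n) n₀)) w :=
          Subtype.ext hwval.symm
        show Set.inclusion _ x ∈ (Subtype.val ⁻¹' Z) ∩ Ω (n + k)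
        rw [hxw]
        exact ⟨show (w : A) ∈ Z from hwval ▸ hx, hwΩ⟩
      · intro x hx
        obtain ⟨j, hj⟩ := Set.mem_iUnion.mp hx
        exact hj.1
    rw [heq]
    exact isOpen_iUnion fun j => (hstep1 (n + j)).preimage
      (incl_cont hSmono tS hSincl (show n ≤ n₀ + (n + j) by omega))

/-- Compatibility of direct limits and products for ascending sequences of
locally kω spaces: given ascending sequences `Xₙ`, `Yₙ` of locally kω spaces
(with continuous inclusion maps) with unions `X`, `Y` carrying the direct limit
topologies, the direct limit topology on `⋃ₙ (Xₙ × Yₙ)` coincides with the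
product topology on `X × Y`; i.e. the natural continuous bijection
`lim→ (Xₙ × Yₙ) → X × Y` is a homeomorphism. -/
theorem directLimit_prod_eq_prod_directLimit
    {A B : Type*}
    (S : ℕ → Set A) (hSmono : Monotone S) (hScover : (⋃ n, S n) = Set.univ)
    (tS : ∀ n, TopologicalSpace (S n))
    (hSincl : ∀ n, @Continuous _ _ (tS n) (tS (n + 1))
      (Set.inclusion (hSmono (Nat.le_succ n))))
    (hSlkom : ∀ n, @IsLocallyKOmega (S n) (tS n))
    (T : ℕ → Set B) (hTmono : Monotone T) (hTcover : (⋃ n, T n) = Set.univ)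
    (tT : ∀ n, TopologicalSpace (T n))
    (hTincl : ∀ n, @Continuous _ _ (tT n) (tT (n + 1))
      (Set.inclusion (hTmono (Nat.le_succ n))))
    (hTlkom : ∀ n, @IsLocallyKOmega (T n) (tT n)) :
    (⨆ n, TopologicalSpace.coinduced
        (fun p : S n × T n => (((p.1 : A), (p.2 : B)) : A × B))
        (@instTopologicalSpaceProd _ _ (tS n) (tT n)))
      = @instTopologicalSpaceProd A B
          (⨆ n, TopologicalSpace.coinduced Subtype.val (tS n))
          (⨆ n, TopologicalSpace.coinduced Subtype.val (tT n)) := by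
  letI : TopologicalSpace A := ⨆ n, TopologicalSpace.coinduced Subtype.val (tS n)
  letI : TopologicalSpace B := ⨆ n, TopologicalSpace.coinduced Subtype.val (tT n)
  letI := tS
  letI := tT
  haveI : ∀ n, T2Space (S n) := fun n => (hSlkom n).1
  haveI : ∀ n, T2Space (T n) := fun n => (hTlkom n).1
  refine le_antisymm (iSup_le fun n => ?_) ?_
  · -- easy direction
    rw [← continuous_iff_coinduced_le]
    have h1 : Continuous (Subtype.val : S n → A) := continuous_iff_coinduced_le.mpr
      (le_iSup (fun m => TopologicalSpace.coinduced (Subtype.val : S m → A) (tS m)) n)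
    have h2 : Continuous (Subtype.val : T n → B) := continuous_iff_coinduced_le.mpr
      (le_iSup (fun m => TopologicalSpace.coinduced (Subtype.val : T m → B) (tT m)) n)
    exact (h1.comp continuous_fst).prodMk (h2.comp continuous_snd)
  · -- hard direction
    rw [TopologicalSpace.le_def]
    intro W hW
    have hWn : ∀ n, IsOpen[@instTopologicalSpaceProd _ _ (tS n) (tT n)]
        ((fun p : S n × T n => (((p.1 : A), (p.2 : B)) : A × B)) ⁻¹' W) := by
      intro n
      have h := isOpen_iSup_iff.mp hW n
      rwa [isOpen_coinduced] at h
    refine isOpen_prod_iff.mpr ?_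
    intro a b hab
    obtain ⟨na, hna⟩ := Set.mem_iUnion.mp (show a ∈ ⋃ n, S n by rw [hScover]; trivial)
    obtain ⟨nb, hnb⟩ := Set.mem_iUnion.mp (show b ∈ ⋃ n, T n by rw [hTcover]; trivial)
    set N := max na nb with hNdef
    have haN : a ∈ S N := hSmono (le_max_left na nb) hna
    have hbN : b ∈ T N := hTmono (le_max_right na nb) hnb
    obtain ⟨C, hCcomp, hClink, haC, hCcrit⟩ := exists_good S hSmono tS hSincl hSlkom N a haN
    obtain ⟨D, hDcomp, hDlink, hbD, hDcrit⟩ := exists_good T hTmono tT hTincl hTlkom N b hbN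
    have hCchain : ∀ {j k : ℕ} (h : j ≤ k), ∀ x ∈ C j,
        Set.inclusion (hSmono (Nat.add_le_add_left h N)) x ∈ C k :=
      @chain_mem A S hSmono N C hClink
    have hDchain : ∀ {j k : ℕ} (h : j ≤ k), ∀ y ∈ D j,
        Set.inclusion (hTmono (Nat.add_le_add_left h N)) y ∈ D k :=
      @chain_mem B T hTmono N D hDlink
    -- construct the pack sequence
    have hstep : ∀ k (p : Pack (S (N + k)) (T (N + k)) (C k) (D k) W),
        ∃ q : Pack (S (N + (k + 1))) (T (N + (k + 1))) (C (k + 1)) (D (k + 1)) W,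
          (∀ x ∈ p.E, Set.inclusion (hSmono (Nat.le_succ (N + k))) x ∈ q.U) ∧
          (∀ y ∈ p.F, Set.inclusion (hTmono (Nat.le_succ (N + k))) y ∈ q.V) := by
      intro k p
      obtain ⟨q, hq1, hq2⟩ := pack_step (hCcomp (k + 1)) (hDcomp (k + 1)) (hWn (N + (k + 1)))
        (p.hE.image (incl_cont hSmono tS hSincl (Nat.le_succ (N + k))))
        (by rintro x ⟨y, hy, rfl⟩; exact hClink k y (p.hEC hy))
        (p.hF.image (incl_cont hTmono tT hTincl (Nat.le_succ (N + k))))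
        (by rintro x ⟨y, hy, rfl⟩; exact hDlink k y (p.hFD hy))
        (by rintro x ⟨y, hy, rfl⟩ z ⟨w, hw, rfl⟩; exact p.hW y hy w hw)
      exact ⟨q, fun x hx => hq1 ⟨x, hx, rfl⟩, fun y hy => hq2 ⟨y, hy, rfl⟩⟩
    obtain ⟨p₀, hp₀a, hp₀b⟩ := pack_step (E' := ({⟨a, haN⟩} : Set (S (N + 0))))
      (F' := ({⟨b, hbN⟩} : Set (T (N + 0)))) (hCcomp 0) (hDcomp 0) (hWn (N + 0))
      isCompact_singleton (Set.singleton_subset_iff.mpr haC)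
      isCompact_singleton (Set.singleton_subset_iff.mpr hbD)
      (by rintro p rfl q rfl; exact hab)
    obtain ⟨g, hg0, hglink⟩ := exists_seq_rec
      (P := fun k => Pack (S (N + k)) (T (N + k)) (C k) (D k) W)
      (fun k p q => (∀ x ∈ p.E, Set.inclusion (hSmono (Nat.le_succ (N + k))) x ∈ q.U) ∧
        (∀ y ∈ p.F, Set.inclusion (hTmono (Nat.le_succ (N + k))) y ∈ q.V)) p₀ hstep
    have hUchain : ∀ {j k : ℕ} (h : j ≤ k), ∀ x ∈ (g j).U,
        Set.inclusion (hSmono (Nat.add_le_add_left h N)) x ∈ (g k).U :=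
      @chain_mem A S hSmono N (fun k => (g k).U)
        (fun k x hx => (hglink k).1 x ((g k).hUE hx))
    have hVchain : ∀ {j k : ℕ} (h : j ≤ k), ∀ y ∈ (g j).V,
        Set.inclusion (hTmono (Nat.add_le_add_left h N)) y ∈ (g k).V :=
      @chain_mem B T hTmono N (fun k => (g k).V)
        (fun k y hy => (hglink k).2 y ((g k).hVF hy))
    choose OA hOAo hOAe using fun j => (g j).hU
    choose OB hOBo hOBe using fun j => (g j).hV
    refine ⟨⋃ k, Subtype.val '' (g k).U, ⋃ k, Subtype.val '' (g k).V, ?_, ?_, ?_, ?_, ?_⟩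
    · -- U' open
      apply hCcrit
      · exact Set.iUnion_mono fun k => Set.image_mono ((g k).hUE.trans (g k).hEC)
      · intro k
        refine ⟨⋃ i : ℕ, Set.inclusion (hSmono (show N + k ≤ N + (k + i) by omega)) ⁻¹'
            OA (k + i), isOpen_iUnion fun i => (hOAo (k + i)).preimage
            (incl_cont hSmono tS hSincl (show N + k ≤ N + (k + i) by omega)), ?_⟩
        ext x
        constructor
        · rintro ⟨hxU, hxC⟩
          obtain ⟨j, hj⟩ := Set.mem_iUnion.mp hxU
          obtain ⟨y, hyU, hyval⟩ := hj
          have hy2 : Set.inclusion (hSmono (Nat.add_le_add_left (Nat.le_add_left j k) N)) y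
              ∈ (g (k + j)).U := hUchain (Nat.le_add_left j k) y hyU
          have hxy : Set.inclusion (hSmono (show N + k ≤ N + (k + j) by omega)) x
              = Set.inclusion (hSmono (Nat.add_le_add_left (Nat.le_add_left j k) N)) y :=
            Subtype.ext hyval.symm
          refine ⟨Set.mem_iUnion.mpr ⟨j, ?_⟩, hxC⟩
          show Set.inclusion _ x ∈ OA (k + j)
          rw [hxy]
          rw [hOAe (k + j)] at hy2
          exact hy2.1
        · rintro ⟨hxO, hxC⟩
          obtain ⟨i, hi⟩ := Set.mem_iUnion.mp hxO
          have hxC2 : Set.inclusion (hSmono (show N + k ≤ N + (k + i) by omega)) x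
              ∈ C (k + i) := hCchain (Nat.le_add_right k i) x hxC
          have hxU2 : Set.inclusion (hSmono (show N + k ≤ N + (k + i) by omega)) x
              ∈ (g (k + i)).U := by rw [hOAe (k + i)]; exact ⟨hi, hxC2⟩
          exact ⟨Set.mem_iUnion.mpr ⟨k + i, ⟨_, hxU2, rfl⟩⟩, hxC⟩
    · -- V' open
      apply hDcrit
      · exact Set.iUnion_mono fun k => Set.image_mono ((g k).hVF.trans (g k).hFD)
      · intro k
        refine ⟨⋃ i : ℕ, Set.inclusion (hTmono (show N + k ≤ N + (k + i) by omega)) ⁻¹'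
            OB (k + i), isOpen_iUnion fun i => (hOBo (k + i)).preimage
            (incl_cont hTmono tT hTincl (show N + k ≤ N + (k + i) by omega)), ?_⟩
        ext x
        constructor
        · rintro ⟨hxU, hxC⟩
          obtain ⟨j, hj⟩ := Set.mem_iUnion.mp hxU
          obtain ⟨y, hyU, hyval⟩ := hj
          have hy2 : Set.inclusion (hTmono (Nat.add_le_add_left (Nat.le_add_left j k) N)) y
              ∈ (g (k + j)).V := hVchain (Nat.le_add_left j k) y hyU
          have hxy : Set.inclusion (hTmono (show N + k ≤ N + (k + j) by omega)) x
              = Set.inclusion (hTmono (Nat.add_le_add_left (Nat.le_add_left j k) N)) y :=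
            Subtype.ext hyval.symm
          refine ⟨Set.mem_iUnion.mpr ⟨j, ?_⟩, hxC⟩
          show Set.inclusion _ x ∈ OB (k + j)
          rw [hxy]
          rw [hOBe (k + j)] at hy2
          exact hy2.1
        · rintro ⟨hxO, hxC⟩
          obtain ⟨i, hi⟩ := Set.mem_iUnion.mp hxO
          have hxC2 : Set.inclusion (hTmono (show N + k ≤ N + (k + i) by omega)) x
              ∈ D (k + i) := hDchain (Nat.le_add_right k i) x hxC
          have hxU2 : Set.inclusion (hTmono (show N + k ≤ N + (k + i) by omega)) x
              ∈ (g (k + i)).V := by rw [hOBe (k + i)]; exact ⟨hi, hxC2⟩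
          exact ⟨Set.mem_iUnion.mpr ⟨k + i, ⟨_, hxU2, rfl⟩⟩, hxC⟩
    · -- a ∈ U'
      refine Set.mem_iUnion.mpr ⟨0, ⟨⟨a, haN⟩, ?_, rfl⟩⟩
      rw [hg0]
      exact hp₀a rfl
    · -- b ∈ V'
      refine Set.mem_iUnion.mpr ⟨0, ⟨⟨b, hbN⟩, ?_, rfl⟩⟩
      rw [hg0]
      exact hp₀b rfl
    · -- product contained in W
      rintro ⟨x, y⟩ ⟨hx, hy⟩
      obtain ⟨j, hj⟩ := Set.mem_iUnion.mp hx
      obtain ⟨x', hx'U, rfl⟩ := hj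
      obtain ⟨l, hl⟩ := Set.mem_iUnion.mp hy
      obtain ⟨y', hy'V, rfl⟩ := hl
      have hx2 := hUchain (le_max_left j l) x' hx'U
      have hy2 := hVchain (le_max_right j l) y' hy'V
      exact (g (max j l)).hW _ ((g (max j l)).hUE hx2) _ ((g (max j l)).hVF hy2)
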